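/- Fix 0 < α ≤ 1 and let f : ℝ → ℝ be locally integrable. With Γ_n^{(ρ)}(f)(x) = ∑_{k=1}^n Δf(I_k^{(ρ)}(x))/(2^{-k}ρ)^α, one has for every x ∈ ℝ: ∫_1^2 ∫_0^ρ Γ_n^{(ρ)}(f_s)(x+s) ds dρ/ρ² = ∫_{2^{-n}}^1 h^{-(2+α)} (∫_0^h (f(x+t) - f(x-t)) dt) dh. -/

import Mathlib

open MeasureTheory intervalIntegral

noncomputable def gg (f : ℝ → ℝ) (x L c : ℝ) : ℝ → ℝ :=
  fun s => f ((⌊(x + s) / L⌋ : ℝ) * L + c - s)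

lemma gg_periodic (f : ℝ → ℝ) {L : ℝ} (hL : 0 < L) (x c : ℝ) :
    Function.Periodic (gg f x L c) L := by
  intro s
  unfold gg
  have h1 : (x + (s + L)) / L = (x + s) / L + 1 := by field_simp; ring
  rw [h1, Int.floor_add_one]
  congr 1
  push_cast
  ring

lemma gg_ae (f : ℝ → ℝ) {L : ℝ} (hL : 0 < L) (x c : ℝ) (m : ℤ) :
    ∀ᵐ s : ℝ, s ∈ Set.uIoc ((m : ℝ) * L - x) ((m : ℝ) * L - x + L) →
      gg f x L c s = f ((m : ℝ) * L + c - s) := by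
  have hne : ∀ᵐ s : ℝ, s ≠ (m : ℝ) * L - x + L := by
    have : ({(m : ℝ) * L - x + L} : Set ℝ)ᶜ ∈ MeasureTheory.ae volume :=
      compl_mem_ae_iff.mpr (measure_singleton _)
    exact this
  filter_upwards [hne] with s hs hmem
  rw [Set.uIoc_of_le (by linarith : (m : ℝ) * L - x ≤ (m : ℝ) * L - x + L)] at hmem
  have hlt : s < (m : ℝ) * L - x + L := lt_of_le_of_ne hmem.2 hs
  have hfl : ⌊(x + s) / L⌋ = m := by
    rw [Int.floor_eq_iff]
    constructor
    · rw [le_div_iff₀ hL]; linarith [hmem.1]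
    · rw [div_lt_iff₀ hL]; push_cast; linarith
  unfold gg
  rw [hfl]

lemma gg_intOn (f : ℝ → ℝ) (hf : LocallyIntegrable f volume) {L : ℝ} (hL : 0 < L)
    (x c : ℝ) (m : ℤ) :
    IntervalIntegrable (gg f x L c) volume ((m : ℝ) * L - x) ((m : ℝ) * L - x + L) := by
  have hfi : IntervalIntegrable f volume (x + c - L) (x + c) :=
    (intervalIntegrable_iff').mpr (hf.integrableOn_isCompact isCompact_uIcc)
  have h1 := hfi.comp_sub_left ((m : ℝ) * L + c)
  have h2 : IntervalIntegrable (fun s => f ((m : ℝ) * L + c - s)) volume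
      ((m : ℝ) * L - x) ((m : ℝ) * L - x + L) := by
    have e1 : (m : ℝ) * L + c - (x + c - L) = (m : ℝ) * L - x + L := by ring
    have e2 : (m : ℝ) * L + c - (x + c) = (m : ℝ) * L - x := by ring
    rw [e1, e2] at h1
    exact h1.symm
  exact h2.congr_ae (((ae_restrict_iff' measurableSet_uIoc).mpr
    ((gg_ae f hL x c m).mono fun s h hmem => (h hmem).symm)))

lemma gg_int (f : ℝ → ℝ) (hf : LocallyIntegrable f volume) {L : ℝ} (hL : 0 < L)
    (x c : ℝ) : ∀ a b : ℝ, IntervalIntegrable (gg f x L c) volume a b := by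
  have key : ∀ (m : ℤ) (N : ℕ),
      IntervalIntegrable (gg f x L c) volume ((m : ℝ) * L - x) ((m : ℝ) * L - x + N * L) := by
    intro m N
    induction N with
    | zero => simp
    | succ N ih =>
      have h2 := gg_intOn f hf hL x c (m + N)
      have h2' : IntervalIntegrable (gg f x L c) volume
          ((m : ℝ) * L - x + N * L) ((m : ℝ) * L - x + (N + 1) * L) := by
        have e1 : ((m : ℝ) + N) * L - x = (m : ℝ) * L - x + N * L := by push_cast; ring
        have e2 : ((m : ℝ) + N) * L - x + L = (m : ℝ) * L - x + (N + 1) * L := by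
          push_cast; ring
        rw [← e1, ← e2]
        exact_mod_cast h2
      have := ih.trans h2'
      convert this using 2
      push_cast; ring
  intro a b
  set m : ℤ := ⌊(min a b + x) / L⌋ with hm
  have h1 : (m : ℝ) * L - x ≤ min a b := by
    have := Int.floor_le ((min a b + x) / L)
    rw [le_div_iff₀ hL] at this
    linarith
  set d : ℝ := max a b - ((m : ℝ) * L - x) with hd
  have hd0 : 0 ≤ d := by
    have : min a b ≤ max a b := min_le_max
    simp only [hd]; linarith
  set N : ℕ := ⌈d / L⌉.toNat with hN
  have h2 : max a b ≤ (m : ℝ) * L - x + N * L := by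
    have hceil : d / L ≤ (⌈d / L⌉ : ℝ) := Int.le_ceil _
    have htn : ((⌈d / L⌉ : ℤ) : ℝ) ≤ (N : ℝ) := by
      exact_mod_cast Int.self_le_toNat _
    have : d / L ≤ (N : ℝ) := le_trans hceil htn
    rw [div_le_iff₀ hL] at this
    simp only [hd] at this
    linarith
  refine (key m N).mono_set ?_
  rw [Set.uIcc_of_le (by nlinarith [h1, h2, min_le_max (a := a) (b := b)] :
    (m : ℝ) * L - x ≤ (m : ℝ) * L - x + N * L)]
  intro t ht
  rcases Set.mem_uIcc.mp ht with h | h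
  · constructor
    · calc (m:ℝ)*L - x ≤ min a b := h1
        _ ≤ a := min_le_left _ _
        _ ≤ t := h.1
    · calc t ≤ b := h.2
        _ ≤ max a b := le_max_right _ _
        _ ≤ _ := h2
  · constructor
    · calc (m:ℝ)*L - x ≤ min a b := h1
        _ ≤ b := min_le_right _ _
        _ ≤ t := h.1
    · calc t ≤ a := h.2
        _ ≤ max a b := le_max_left _ _
        _ ≤ _ := h2

lemma gg_valOn (f : ℝ → ℝ) {L : ℝ} (hL : 0 < L) (x c : ℝ) (m : ℤ) :
    ∫ s in ((m : ℝ) * L - x)..((m : ℝ) * L - x + L), gg f x L c s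
      = ∫ u in (x + c - L)..(x + c), f u := by
  rw [intervalIntegral.integral_congr_ae (gg_ae f hL x c m)]
  rw [intervalIntegral.integral_comp_sub_left f ((m : ℝ) * L + c)]
  congr 1 <;> ring

lemma gg_val (f : ℝ → ℝ) (hf : LocallyIntegrable f volume) {L : ℝ} (hL : 0 < L)
    (x c : ℝ) (N : ℕ) :
    ∫ s in (0:ℝ)..(N * L), gg f x L c s = N * ∫ u in (x + c - L)..(x + c), f u := by
  have hper := gg_periodic f hL x c
  have hint := gg_int f hf hL x c
  have h1 := hper.intervalIntegral_add_zsmul_eq (N : ℤ) 0 hint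
  have h2 := hper.intervalIntegral_add_eq 0 ((0 : ℝ) * L - x)
  have h3 := gg_valOn f hL x c 0
  simp only [Int.cast_zero] at h3
  simp only [zero_add, zsmul_eq_mul, Int.cast_natCast] at h1
  rw [show (N : ℝ) * L = ((N : ℤ) : ℝ) * L by push_cast; ring] at h1 ⊢
  rw [zero_add] at h2
  rw [h1, h2, h3]


lemma inner_eq (f : ℝ → ℝ) (hf : LocallyIntegrable f volume) (x ρ : ℝ) (hρ : 0 < ρ)
    (α : ℝ) (n : ℕ) :
    (∫ s in (0 : ℝ)..ρ, ∑ k ∈ Finset.Icc 1 n,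
        (f (((⌊(x + s) / (ρ / 2 ^ k)⌋ : ℝ) + 1) * (ρ / 2 ^ k) - s) -
         f ((⌊(x + s) / (ρ / 2 ^ k)⌋ : ℝ) * (ρ / 2 ^ k) - s)) / (ρ / 2 ^ k) ^ α)
      = ∑ k ∈ Finset.Icc 1 n,
        (2 : ℝ) ^ k * (∫ t in (0 : ℝ)..(ρ / 2 ^ k), (f (x + t) - f (x - t))) / (ρ / 2 ^ k) ^ α := by
  have hterm : ∀ k : ℕ, ∀ s : ℝ,
      (f (((⌊(x + s) / (ρ / 2 ^ k)⌋ : ℝ) + 1) * (ρ / 2 ^ k) - s) -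
        f ((⌊(x + s) / (ρ / 2 ^ k)⌋ : ℝ) * (ρ / 2 ^ k) - s)) / (ρ / 2 ^ k) ^ α
      = (gg f x (ρ / 2 ^ k) (ρ / 2 ^ k) s - gg f x (ρ / 2 ^ k) 0 s) / (ρ / 2 ^ k) ^ α := by
    intro k s
    simp only [gg]
    congr 3 <;> ring
  have hL : ∀ k : ℕ, (0 : ℝ) < ρ / 2 ^ k := fun k => by positivity
  have hint : ∀ k : ℕ, IntervalIntegrable (fun s =>
      (f (((⌊(x + s) / (ρ / 2 ^ k)⌋ : ℝ) + 1) * (ρ / 2 ^ k) - s) -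
        f ((⌊(x + s) / (ρ / 2 ^ k)⌋ : ℝ) * (ρ / 2 ^ k) - s)) / (ρ / 2 ^ k) ^ α)
      volume 0 ρ := by
    intro k
    have := (((gg_int f hf (hL k) x (ρ / 2 ^ k)) 0 ρ).sub ((gg_int f hf (hL k) x 0) 0 ρ)).div_const
      ((ρ / 2 ^ k) ^ α)
    exact this.congr_ae (Filter.Eventually.of_forall fun s => (hterm k s).symm)
  rw [intervalIntegral.integral_finset_sum (fun k _ => hint k)]
  refine Finset.sum_congr rfl fun k hk => ?_
  have e1 : (∫ s in (0:ℝ)..ρ, (f (((⌊(x + s) / (ρ / 2 ^ k)⌋ : ℝ) + 1) * (ρ / 2 ^ k) - s) -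
      f ((⌊(x + s) / (ρ / 2 ^ k)⌋ : ℝ) * (ρ / 2 ^ k) - s)) / (ρ / 2 ^ k) ^ α)
      = (∫ s in (0:ℝ)..ρ, (gg f x (ρ / 2 ^ k) (ρ / 2 ^ k) s - gg f x (ρ / 2 ^ k) 0 s))
        / (ρ / 2 ^ k) ^ α := by
    rw [← intervalIntegral.integral_div]
    exact intervalIntegral.integral_congr fun s _ => hterm k s
  rw [e1, intervalIntegral.integral_sub ((gg_int f hf (hL k) x _) 0 ρ)
    ((gg_int f hf (hL k) x 0) 0 ρ)]
  have hρeq : ρ = ((2 ^ k : ℕ) : ℝ) * (ρ / 2 ^ k) := by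
    push_cast; field_simp
  rw [show (∫ s in (0:ℝ)..ρ, gg f x (ρ / 2 ^ k) (ρ / 2 ^ k) s)
      = ∫ s in (0:ℝ)..(((2 ^ k : ℕ) : ℝ) * (ρ / 2 ^ k)), gg f x (ρ / 2 ^ k) (ρ / 2 ^ k) s
    from by rw [← hρeq]]
  rw [show (∫ s in (0:ℝ)..ρ, gg f x (ρ / 2 ^ k) 0 s)
      = ∫ s in (0:ℝ)..(((2 ^ k : ℕ) : ℝ) * (ρ / 2 ^ k)), gg f x (ρ / 2 ^ k) 0 s
    from by rw [← hρeq]]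
  rw [gg_val f hf (hL k) x _ (2 ^ k), gg_val f hf (hL k) x 0 (2 ^ k)]
  have hsplit : (∫ t in (0:ℝ)..(ρ / 2 ^ k), (f (x + t) - f (x - t)))
      = (∫ u in x..(x + ρ / 2 ^ k), f u) - ∫ u in (x - ρ / 2 ^ k)..x, f u := by
    have hfi : ∀ a b : ℝ, IntervalIntegrable f volume a b := fun a b =>
      (intervalIntegrable_iff').mpr (hf.integrableOn_isCompact isCompact_uIcc)
    have h1 : IntervalIntegrable (fun t => f (x + t)) volume 0 (ρ / 2 ^ k) := by
      have := (hfi (x + 0) (x + ρ / 2 ^ k)).comp_add_left x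
      simpa using this
    have h2 : IntervalIntegrable (fun t => f (x - t)) volume 0 (ρ / 2 ^ k) := by
      have := (hfi (x - 0) (x - ρ / 2 ^ k)).comp_sub_left x
      simpa using this
    rw [intervalIntegral.integral_sub h1 h2, intervalIntegral.integral_comp_add_left,
      intervalIntegral.integral_comp_sub_left]
    norm_num
  rw [hsplit]
  push_cast
  ring_nf

/-- Averaging identity: `∫_1^2 ∫_0^ρ Γ_n^{(ρ)}(f_s)(x+s) ds dρ/ρ²
= ∫_{2^{-n}}^1 h^{-(2+α)} ∫_0^h (f(x+t) - f(x-t)) dt dh`, where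
`Γ_n^{(ρ)}(g)(y) = ∑_{k=1}^n Δg(I_k^{(ρ)}(y))/(2^{-k}ρ)^α` and `f_s(y) = f(y-s)`. -/
theorem stmt6 (α : ℝ) (hα : 0 < α) (hα1 : α ≤ 1)
    (f : ℝ → ℝ) (hf : LocallyIntegrable f volume) (n : ℕ) (hn : 1 ≤ n) (x : ℝ) :
    (∫ ρ in (1 : ℝ)..2, (∫ s in (0 : ℝ)..ρ,
        ∑ k ∈ Finset.Icc 1 n,
          (f (((⌊(x + s) / (ρ / 2 ^ k)⌋ : ℝ) + 1) * (ρ / 2 ^ k) - s) -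
           f ((⌊(x + s) / (ρ / 2 ^ k)⌋ : ℝ) * (ρ / 2 ^ k) - s)) / (ρ / 2 ^ k) ^ α) / ρ ^ 2) =
      ∫ h in (1 / 2 ^ n : ℝ)..1,
        (∫ t in (0 : ℝ)..h, (f (x + t) - f (x - t))) / h ^ (2 + α) := by
  have hfi : ∀ a b : ℝ, IntervalIntegrable f volume a b := fun a b =>
    (intervalIntegrable_iff').mpr (hf.integrableOn_isCompact isCompact_uIcc)
  set F : ℝ → ℝ := fun h => ∫ t in (0 : ℝ)..h, (f (x + t) - f (x - t)) with hFdef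
  have hFint : ∀ a b : ℝ, IntervalIntegrable (fun t => f (x + t) - f (x - t)) volume a b := by
    intro a b
    have h1 : IntervalIntegrable (fun t => f (x + t)) volume a b := by
      have := (hfi (x + a) (x + b)).comp_add_left x
      simpa using this
    have h2 : IntervalIntegrable (fun t => f (x - t)) volume a b := by
      have := (hfi (x - a) (x - b)).comp_sub_left x
      simpa using this
    exact h1.sub h2
  have hFcont : Continuous F := intervalIntegral.continuous_primitive hFint 0
  -- integrand in h
  have hGcont : ∀ a b : ℝ, 0 < a → 0 < b →
      IntervalIntegrable (fun h => F h / h ^ (2 + α)) volume a b := by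
    intro a b ha hb
    apply ContinuousOn.intervalIntegrable
    apply ContinuousOn.div hFcont.continuousOn
    · exact fun h hh => Real.continuousAt_rpow_const h (2 + α)
        (Or.inl (by
          rcases Set.mem_uIcc.mp hh with h' | h' <;> nlinarith [h'.1])) |>.continuousWithinAt
    · intro h hh
      have hh0 : 0 < h := by rcases Set.mem_uIcc.mp hh with h' | h' <;> nlinarith [h'.1]
      exact (Real.rpow_pos_of_pos hh0 _).ne'
  -- step B: rewrite the inner integral
  have stepB : (∫ ρ in (1 : ℝ)..2, (∫ s in (0 : ℝ)..ρ,
        ∑ k ∈ Finset.Icc 1 n,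
          (f (((⌊(x + s) / (ρ / 2 ^ k)⌋ : ℝ) + 1) * (ρ / 2 ^ k) - s) -
           f ((⌊(x + s) / (ρ / 2 ^ k)⌋ : ℝ) * (ρ / 2 ^ k) - s)) / (ρ / 2 ^ k) ^ α) / ρ ^ 2)
      = ∫ ρ in (1 : ℝ)..2, ∑ k ∈ Finset.Icc 1 n,
          (2 : ℝ) ^ k * F (ρ / 2 ^ k) / (ρ / 2 ^ k) ^ α / ρ ^ 2 := by
    refine intervalIntegral.integral_congr fun ρ hρ => ?_
    have hρ0 : (0 : ℝ) < ρ := by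
      rcases Set.mem_uIcc.mp hρ with h' | h' <;> linarith [h'.1]
    rw [inner_eq f hf x ρ hρ0 α n, Finset.sum_div]
  rw [stepB]
  -- step C: swap sum and integral
  have hterm_cont : ∀ k ∈ Finset.Icc 1 n, IntervalIntegrable
      (fun ρ => (2 : ℝ) ^ k * F (ρ / 2 ^ k) / (ρ / 2 ^ k) ^ α / ρ ^ 2) volume 1 2 := by
    intro k _
    apply ContinuousOn.intervalIntegrable
    have hpos : ∀ ρ : ℝ, ρ ∈ Set.uIcc (1:ℝ) 2 → (0:ℝ) < ρ := fun ρ hρ => by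
      rcases Set.mem_uIcc.mp hρ with h' | h' <;> linarith [h'.1]
    apply ContinuousOn.div
    · apply ContinuousOn.div
      · exact (continuous_const.mul (hFcont.comp (continuous_id.div_const _))).continuousOn
      · exact ContinuousOn.rpow_const (continuousOn_id.div_const _) fun ρ hρ =>
          Or.inr (by linarith)
      · intro ρ hρ
        exact (Real.rpow_pos_of_pos (div_pos (hpos ρ hρ) (by positivity)) _).ne'
    · exact (continuous_pow 2).continuousOn
    · intro ρ hρ
      exact pow_ne_zero _ (hpos ρ hρ).ne'
  rw [intervalIntegral.integral_finset_sum hterm_cont]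
  -- step D: change of variables in each term
  have stepD : ∀ k ∈ Finset.Icc 1 n,
      (∫ ρ in (1:ℝ)..2, (2 : ℝ) ^ k * F (ρ / 2 ^ k) / (ρ / 2 ^ k) ^ α / ρ ^ 2)
        = ∫ h in (1 / 2 ^ k : ℝ)..(2 / 2 ^ k), F h / h ^ (2 + α) := by
    intro k _
    have h2k : (0:ℝ) < 2 ^ k := by positivity
    have e1 : (∫ ρ in (1:ℝ)..2, (2 : ℝ) ^ k * F (ρ / 2 ^ k) / (ρ / 2 ^ k) ^ α / ρ ^ 2)
        = ∫ ρ in (1:ℝ)..2, (fun h => F h / h ^ (2 + α) / 2 ^ k) (ρ / 2 ^ k) := by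
      refine intervalIntegral.integral_congr fun ρ hρ => ?_
      have hρ0 : (0 : ℝ) < ρ := by
        rcases Set.mem_uIcc.mp hρ with h' | h' <;> linarith [h'.1]
      have hL : (0:ℝ) < ρ / 2 ^ k := by positivity
      simp only []
      rw [Real.rpow_add hL, Real.rpow_two]
      have hLα : (0:ℝ) < (ρ / 2 ^ k) ^ α := Real.rpow_pos_of_pos hL _
      field_simp
    rw [e1, intervalIntegral.integral_comp_div (fun h => F h / h ^ (2 + α) / 2 ^ k) h2k.ne']
    rw [intervalIntegral.integral_div, smul_eq_mul]
    field_simp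
  rw [Finset.sum_congr rfl stepD]
  -- step E: telescoping
  set a : ℕ → ℝ := fun i => 1 / 2 ^ (n - i) with ha
  have hsum : ∑ k ∈ Finset.Icc 1 n, (∫ h in (1 / 2 ^ k : ℝ)..(2 / 2 ^ k), F h / h ^ (2 + α))
      = ∑ i ∈ Finset.range n, ∫ h in a i..a (i + 1), F h / h ^ (2 + α) := by
    refine Finset.sum_bij' (fun k _ => n - k) (fun i _ => n - i) ?_ ?_ ?_ ?_ ?_
    · intro k hk
      simp only [Finset.mem_Icc] at hk
      simp only [Finset.mem_range]
      omega
    · intro i hi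
      simp only [Finset.mem_range] at hi
      simp only [Finset.mem_Icc]
      omega
    · intro k hk
      simp only [Finset.mem_Icc] at hk
      show n - (n - k) = k
      omega
    · intro i hi
      simp only [Finset.mem_range] at hi
      show n - (n - i) = i
      omega
    · intro k hk
      simp only [Finset.mem_Icc] at hk
      have e1 : a (n - k) = 1 / 2 ^ k := by
        simp only [ha]
        congr 1
        congr 1
        omega
      have e2 : a (n - k + 1) = 2 / 2 ^ k := by
        simp only [ha]
        have : n - (n - k + 1) = k - 1 := by omega
        rw [this]
        have : (2 : ℝ) ^ k = 2 * 2 ^ (k - 1) := by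
          rw [← pow_succ']
          congr 1
          omega
        rw [this]
        rw [mul_comm]
        field_simp
      rw [e1, e2]
  rw [hsum, intervalIntegral.sum_integral_adjacent_intervals ?hint]
  case hint =>
    intro i hi
    apply hGcont <;> positivity
  have e0 : a 0 = 1 / 2 ^ n := by simp [ha]
  have en : a n = 1 := by simp [ha]
  rw [e0, en]
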